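/- Let κ and r be integers with r ≥ 0 and κ ≥ r + 2. Then 1 + ∑_{2 ≤ i ≤ r, i even} ∏_{0 ≤ l ≤ i-2, l even} [(r-l)²(r-l-1)²] / [(i-l)(i+2κ-2r-l-2)(r-i+l+1)(r-i+l+2)] = 2^{-r} · binom(2κ-2, r) / binom(κ-1, r). -/

import Mathlib

open Finset

noncomputable def ttf (n r m : ℕ) : ℝ :=
  if 2*m ≤ r then
    ((r.factorial : ℝ) * (n+r).factorial * 2^(r-2*m)) /
      ((r-2*m).factorial * m.factorial * (n+m).factorial)
  else 0

lemma ttf_star (n r m : ℕ) (h : 2*m ≤ r) :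
    ((r:ℝ)+1-2*m) * ttf n (r+1) m + 2*(m+1) * ttf n (r+1) (m+1)
      = ((r:ℝ)+1)*(2*n+r+2) * ttf (n+1) r m := by
  rcases eq_or_lt_of_le h with he | hl
  · -- 2*m = r
    obtain rfl := he
    rw [ttf, ttf, ttf, if_pos (by omega), if_neg (by omega), if_pos le_rfl]
    rw [show 2*m+1-2*m = 1 from by omega, show 2*m-2*m = 0 from by omega,
      show (2*m+1).factorial = (2*m+1) * (2*m).factorial from rfl,
      show n+1+m = n+m+1 from by omega,
      show (n+m+1).factorial = (n+m+1) * (n+m).factorial from rfl,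
      show n+(2*m+1) = (n+2*m)+1 from by omega,
      show n+1+2*m = (n+2*m)+1 from by omega,
      show ((n+2*m)+1).factorial = ((n+2*m)+1) * (n+2*m).factorial from rfl]
    have f1 : ((2*m).factorial : ℝ) ≠ 0 := by positivity
    have f2 : ((n+m).factorial : ℝ) ≠ 0 := by positivity
    have f3 : ((n+2*m).factorial : ℝ) ≠ 0 := by positivity
    have f4 : (m.factorial : ℝ) ≠ 0 := by positivity
    push_cast
    field_simp
    ring
  · obtain ⟨a, rfl⟩ : ∃ a, r = 2*m+1+a := ⟨r - (2*m+1), by omega⟩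
    rw [ttf, ttf, ttf, if_pos (by omega), if_pos (by omega), if_pos (by omega)]
    rw [show 2*m+1+a+1-2*m = a+2 from by omega,
      show 2*m+1+a+1-2*(m+1) = a from by omega,
      show 2*m+1+a-2*m = a+1 from by omega,
      show (a+2).factorial = (a+2)*((a+1)*a.factorial) from rfl,
      show (a+1).factorial = (a+1)*a.factorial from rfl,
      show (m+1).factorial = (m+1)*m.factorial from rfl,
      show n+(m+1) = (n+m)+1 from by omega,
      show n+1+m = (n+m)+1 from by omega,
      show ((n+m)+1).factorial = ((n+m)+1)*(n+m).factorial from rfl,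
      show (2*m+1+a+1).factorial = (2*m+1+a+1)*(2*m+1+a).factorial from rfl,
      show n+(2*m+1+a+1) = (n+(2*m+1+a))+1 from by omega,
      show n+1+(2*m+1+a) = (n+(2*m+1+a))+1 from by omega,
      show ((n+(2*m+1+a))+1).factorial = ((n+(2*m+1+a))+1)*(n+(2*m+1+a)).factorial from rfl]
    have f1 : (a.factorial : ℝ) ≠ 0 := by positivity
    have f2 : ((n+m).factorial : ℝ) ≠ 0 := by positivity
    have f3 : ((n+(2*m+1+a)).factorial : ℝ) ≠ 0 := by positivity
    have f4 : (m.factorial : ℝ) ≠ 0 := by positivity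
    have f5 : ((2*m+1+a).factorial : ℝ) ≠ 0 := by positivity
    push_cast
    field_simp
    ring

lemma ttf_sum : ∀ r n, ∑ m ∈ range (r/2+1), ttf n r m
    = ((2*n+2*r).factorial : ℝ) / ((2*n+r).factorial) := by
  intro r
  induction r with
  | zero =>
    intro n
    simp only [Nat.zero_eq, Nat.zero_div, Nat.mul_zero, Nat.add_zero]
    simp [ttf]
    rw [div_self (by positivity), div_self (by positivity)]
  | succ r ih =>
    intro n
    have hz : ((r:ℝ)+1-2*((r/2+1 : ℕ) : ℝ)) * ttf n (r+1) (r/2+1) = 0 := by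
      rcases Nat.even_or_odd r with ⟨s, hs⟩ | ⟨s, hs⟩
      · have : ¬ (2*(r/2+1) ≤ r+1) := by omega
        rw [ttf, if_neg this, mul_zero]
      · have h2 : ((r:ℝ)+1-2*((r/2+1 : ℕ) : ℝ)) = 0 := by
          have hh : r/2+1 = s+1 := by omega
          rw [hh]; push_cast [hs]; ring
        rw [h2, zero_mul]
    have key : ∑ m ∈ range (r/2+2), ((r:ℝ)+1) * ttf n (r+1) m
        = ((r:ℝ)+1)*(2*n+r+2) * (((2*n+2*r+2).factorial : ℝ)/((2*n+r+2).factorial)) := by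
      have e1 : ∑ m ∈ range (r/2+1), (((r:ℝ)+1-2*m) * ttf n (r+1) m + 2*(m+1) * ttf n (r+1) (m+1))
          = ((r:ℝ)+1)*(2*n+r+2) * (((2*n+2*r+2).factorial : ℝ)/((2*n+r+2).factorial)) := by
        rw [Finset.sum_congr rfl (fun m hm => ttf_star n r m (by
          simp only [mem_range] at hm; omega))]
        rw [← Finset.mul_sum, ih (n+1), show 2*(n+1)+2*r = 2*n+2*r+2 from by ring,
          show 2*(n+1)+r = 2*n+r+2 from by ring]
      rw [← e1, Finset.sum_add_distrib]
      have e2 : ∑ m ∈ range (r/2+2), 2*(m:ℝ) * ttf n (r+1) m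
          = (∑ m ∈ range (r/2+1), 2*((m:ℝ)+1) * ttf n (r+1) (m+1)) + 2*(0:ℝ) * ttf n (r+1) 0 := by
        rw [Finset.sum_range_succ' (fun m => 2*(m:ℝ) * ttf n (r+1) m) (r/2+1)]
        push_cast
        ring_nf
      have e3 : ∑ m ∈ range (r/2+2), ((r:ℝ)+1-2*m) * ttf n (r+1) m
          = (∑ m ∈ range (r/2+1), ((r:ℝ)+1-2*m) * ttf n (r+1) m) := by
        rw [Finset.sum_range_succ, hz, add_zero]
      have e4 : ∑ m ∈ range (r/2+2), ((r:ℝ)+1) * ttf n (r+1) m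
          = (∑ m ∈ range (r/2+2), ((r:ℝ)+1-2*m) * ttf n (r+1) m)
            + ∑ m ∈ range (r/2+2), 2*(m:ℝ) * ttf n (r+1) m := by
        rw [← Finset.sum_add_distrib]
        exact Finset.sum_congr rfl (fun m hm => by ring)
      rw [e4, e2, e3, mul_zero, zero_mul, add_zero]
    have hrange : ∑ m ∈ range (r/2+2), ttf n (r+1) m
        = ∑ m ∈ range ((r+1)/2+1), ttf n (r+1) m := by
      rcases Nat.even_or_odd r with ⟨s, hs⟩ | ⟨s, hs⟩
      · have h1 : (r+1)/2 = r/2 := by omega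
        rw [h1, Finset.sum_range_succ, ttf, if_neg (by omega), add_zero]
      · have h1 : (r+1)/2 = r/2+1 := by omega
        rw [h1]
    rw [← Finset.mul_sum] at key
    have hr1 : ((r:ℝ)+1) ≠ 0 := by positivity
    have h5 : ∑ m ∈ range (r/2+2), ttf n (r+1) m
        = (2*(n:ℝ)+r+2) * (((2*n+2*r+2).factorial : ℝ)/((2*n+r+2).factorial)) :=
      mul_left_cancel₀ hr1 (by rw [key]; ring)
    rw [← hrange, h5,
      show 2*n+2*(r+1) = (2*n+2*r+2) from by ring,
      show 2*n+(r+1) = 2*n+r+1 from by ring,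
      show (2*n+r+2).factorial = (2*n+r+2) * (2*n+r+1).factorial from rfl]
    have f1 : ((2*n+r+1).factorial : ℝ) ≠ 0 := by positivity
    push_cast
    field_simp

lemma prod_eq (n r m κ i : ℕ) (hκ : κ = n+r+1) (hi : i = 2*m) (h : 2*m ≤ r) :
    (∏ l ∈ (Finset.range (i - 1)).filter (fun l => Even l),
        (((r : ℝ) - l) ^ 2 * ((r : ℝ) - l - 1) ^ 2) /
          (((i : ℝ) - l) * ((i : ℝ) + 2 * κ - 2 * r - l - 2) *
            ((r : ℝ) - i + l + 1) * ((r : ℝ) - i + l + 2)))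
      = ((r.factorial : ℝ) * n.factorial) /
          ((r-2*m).factorial * 4^m * m.factorial * (n+m).factorial) := by
  subst hκ hi
  have hset : (Finset.range (2*m - 1)).filter (fun l => Even l)
      = (Finset.range m).image (fun j => 2*j) := by
    ext l
    simp only [Finset.mem_filter, Finset.mem_range, Finset.mem_image]
    constructor
    · rintro ⟨h1, c, hc⟩
      exact ⟨c, by omega, by omega⟩
    · rintro ⟨j, hj, rfl⟩
      exact ⟨by omega, j, by omega⟩
  rw [hset, Finset.prod_image (fun x hx y hy hxy => by omega)]
  suffices hgen : ∀ p, p ≤ m →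
      (∏ j ∈ Finset.range p,
        (((r : ℝ) - (2*j : ℕ)) ^ 2 * ((r : ℝ) - (2*j : ℕ) - 1) ^ 2) /
          ((((2*m : ℕ) : ℝ) - (2*j : ℕ)) * (((2*m : ℕ) : ℝ) + 2 * ((n+r+1 : ℕ) : ℝ) - 2 * r - (2*j : ℕ) - 2) *
            ((r : ℝ) - (2*m : ℕ) + (2*j : ℕ) + 1) * ((r : ℝ) - (2*m : ℕ) + (2*j : ℕ) + 2)))
      = ((r.factorial : ℝ)^2 * (m-p).factorial * (m+n-p).factorial * (r-2*m).factorial) /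
          (((r-2*p).factorial)^2 * 4^p * m.factorial * (m+n).factorial * ((r-2*m)+2*p).factorial) by
    have hm := hgen m le_rfl
    rw [hm, Nat.sub_self, show m+n-m = n from by omega, show (r-2*m)+2*m = r from by omega,
      show m+n = n+m from by omega]
    have f1 : ((r-2*m).factorial : ℝ) ≠ 0 := by positivity
    have f2 : (m.factorial : ℝ) ≠ 0 := by positivity
    have f3 : ((n+m).factorial : ℝ) ≠ 0 := by positivity
    have f4 : (r.factorial : ℝ) ≠ 0 := by positivity
    have f5 : (4:ℝ)^m ≠ 0 := by positivity
    field_simp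
    ring
  intro p
  induction p with
  | zero =>
    intro _
    simp only [Finset.prod_range_zero, Nat.mul_zero, Nat.sub_zero, Nat.add_zero, pow_zero]
    have f1 : ((r-2*m).factorial : ℝ) ≠ 0 := by positivity
    have f2 : (m.factorial : ℝ) ≠ 0 := by positivity
    have f3 : ((m+n).factorial : ℝ) ≠ 0 := by positivity
    have f4 : (r.factorial : ℝ) ≠ 0 := by positivity
    field_simp
  | succ p ihp =>
    intro hp
    obtain ⟨b, hb⟩ : ∃ b, m = p+1+b := ⟨m-(p+1), by omega⟩
    subst hb
    obtain ⟨a, ha⟩ : ∃ a, r = 2*(p+1+b)+a := ⟨r-2*(p+1+b), by omega⟩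
    subst ha
    rw [Finset.prod_range_succ, ihp (by omega)]
    rw [show p+1+b-p = b+1 from by omega,
      show p+1+b-(p+1) = b from by omega,
      show (p+1+b)+n-p = (n+b)+1 from by omega,
      show (p+1+b)+n-(p+1) = n+b from by omega,
      show 2*(p+1+b)+a-2*p = (a+2*b+1)+1 from by omega,
      show 2*(p+1+b)+a-2*(p+1) = a+2*b from by omega,
      show 2*(p+1+b)+a-2*(p+1+b) = a from by omega,
      show a+2*(p+1) = (a+2*p+1)+1 from by omega,
      show (b+1).factorial = (b+1)*b.factorial from rfl,
      show ((n+b)+1).factorial = ((n+b)+1)*(n+b).factorial from rfl,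
      show ((a+2*b+1)+1).factorial = ((a+2*b+1)+1)*((a+2*b+1)*(a+2*b).factorial) from rfl,
      show ((a+2*p+1)+1).factorial = ((a+2*p+1)+1)*((a+2*p+1)*(a+2*p).factorial) from rfl,
      show a+2*p+1 = (a+2*p)+1 from by omega]
    have f1 : ((a+2*b).factorial : ℝ) ≠ 0 := by positivity
    have f2 : ((a+2*p).factorial : ℝ) ≠ 0 := by positivity
    have f3 : (b.factorial : ℝ) ≠ 0 := by positivity
    have f4 : ((n+b).factorial : ℝ) ≠ 0 := by positivity
    have f5 : (((p+1+b)).factorial : ℝ) ≠ 0 := by positivity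
    have f6 : (((p+1+b)+n).factorial : ℝ) ≠ 0 := by positivity
    have f7 : (a.factorial : ℝ) ≠ 0 := by positivity
    have f8 : ((2*(p+1+b)+a).factorial : ℝ) ≠ 0 := by positivity
    have f9 : (4:ℝ)^p ≠ 0 := by positivity
    push_cast
    have g1 : (2*((p:ℝ)+1+b) - 2*p) ≠ 0 := by nlinarith [Nat.cast_nonneg (α := ℝ) b]
    have g2 : (2*((p:ℝ)+1+b) + 2*((n:ℝ)+(2*((p:ℝ)+1+b)+a)+1) - 2*(2*((p:ℝ)+1+b)+a) - 2*p - 2) ≠ 0 := by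
      nlinarith [Nat.cast_nonneg (α := ℝ) b, Nat.cast_nonneg (α := ℝ) n]
    field_simp
    rw [div_eq_iff (by ring_nf; positivity)]
    ring

lemma TT_eq (n r m : ℕ) (h : 2*m ≤ r) :
    ((r.factorial : ℝ) * n.factorial) /
      ((r-2*m).factorial * 4^m * m.factorial * (n+m).factorial)
    = ttf n r m * ((n.factorial : ℝ)/(2^r * (n+r).factorial)) := by
  rw [ttf, if_pos h]
  obtain ⟨a, rfl⟩ : ∃ a, r = 2*m+a := ⟨r-2*m, by omega⟩
  rw [show 2*m+a-2*m = a from by omega]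
  have f1 : (a.factorial : ℝ) ≠ 0 := by positivity
  have f2 : (m.factorial : ℝ) ≠ 0 := by positivity
  have f3 : ((n+m).factorial : ℝ) ≠ 0 := by positivity
  have f4 : ((n+(2*m+a)).factorial : ℝ) ≠ 0 := by positivity
  have f5 : (2:ℝ)^(2*m+a) ≠ 0 := by positivity
  have f6 : (4:ℝ)^m ≠ 0 := by positivity
  field_simp
  rw [show (4:ℝ)^m = 2^(m*2) from by
    rw [show (4:ℝ) = 2^2 from by norm_num, ← pow_mul, Nat.mul_comm]]
  ring

/-- Squared-norm identity for the holomorphic vector `v_r^{hol}` (unbalanced case):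
for integers `r ≥ 0`, `κ ≥ r + 2`,
`1 + ∑_{2 ≤ i ≤ r, i even} ∏_{0 ≤ l ≤ i-2, l even}
    (r-l)²(r-l-1)² / ((i-l)(i+2κ-2r-l-2)(r-i+l+1)(r-i+l+2))
  = 2^{-r} · C(2κ-2, r) / C(κ-1, r)`. -/
theorem norm_vrhol_unbalanced (r κ : ℕ) (hκ : r + 2 ≤ κ) :
    1 + ∑ i ∈ (Finset.range (r + 1)).filter (fun i => 2 ≤ i ∧ Even i),
        ∏ l ∈ (Finset.range (i - 1)).filter (fun l => Even l),
          (((r : ℝ) - l) ^ 2 * ((r : ℝ) - l - 1) ^ 2) /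
            (((i : ℝ) - l) * ((i : ℝ) + 2 * κ - 2 * r - l - 2) *
              ((r : ℝ) - i + l + 1) * ((r : ℝ) - i + l + 2)) =
      (2 : ℝ) ^ (-(r : ℤ)) * ((2 * κ - 2).choose r : ℝ) / ((κ - 1).choose r : ℝ) := by
  set n := κ - (r+1) with hn
  have hκn : κ = n + r + 1 := by omega
  -- step 1: absorb the 1 as the i = 0 term
  have hins : (Finset.range (r+1)).filter (fun i => Even i)
      = insert 0 ((Finset.range (r+1)).filter (fun i => 2 ≤ i ∧ Even i)) := by
    ext i
    simp only [Finset.mem_filter, Finset.mem_range, Finset.mem_insert]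
    constructor
    · rintro ⟨h1, c, hc⟩
      rcases Nat.eq_zero_or_pos i with h0 | h0
      · exact Or.inl h0
      · exact Or.inr ⟨h1, ⟨by omega, c, hc⟩⟩
    · rintro (rfl | ⟨h1, h2, c, hc⟩)
      · exact ⟨by omega, 0, by omega⟩
      · exact ⟨h1, c, hc⟩
  have h0notin : (0:ℕ) ∉ (Finset.range (r+1)).filter (fun i => 2 ≤ i ∧ Even i) := by
    simp
  have hstep1 : ∑ i ∈ (Finset.range (r+1)).filter (fun i => Even i),
      (∏ l ∈ (Finset.range (i - 1)).filter (fun l => Even l),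
          (((r : ℝ) - l) ^ 2 * ((r : ℝ) - l - 1) ^ 2) /
            (((i : ℝ) - l) * ((i : ℝ) + 2 * κ - 2 * r - l - 2) *
              ((r : ℝ) - i + l + 1) * ((r : ℝ) - i + l + 2)))
      = 1 + ∑ i ∈ (Finset.range (r+1)).filter (fun i => 2 ≤ i ∧ Even i),
          (∏ l ∈ (Finset.range (i - 1)).filter (fun l => Even l),
          (((r : ℝ) - l) ^ 2 * ((r : ℝ) - l - 1) ^ 2) /
            (((i : ℝ) - l) * ((i : ℝ) + 2 * κ - 2 * r - l - 2) *
              ((r : ℝ) - i + l + 1) * ((r : ℝ) - i + l + 2))) := by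
    rw [hins, Finset.sum_insert h0notin]
    norm_num
  rw [← hstep1]
  -- step 2: reindex i = 2m
  have himg : (Finset.range (r+1)).filter (fun i => Even i)
      = (Finset.range (r/2+1)).image (fun m => 2*m) := by
    ext i
    simp only [Finset.mem_filter, Finset.mem_range, Finset.mem_image]
    constructor
    · rintro ⟨h1, c, hc⟩
      exact ⟨c, by omega, by omega⟩
    · rintro ⟨m, hm, rfl⟩
      exact ⟨by omega, m, by omega⟩
  rw [himg, Finset.sum_image (fun x hx y hy hxy => by omega)]
  have hstep3 : ∀ m ∈ Finset.range (r/2+1),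
      (∏ l ∈ (Finset.range (2*m - 1)).filter (fun l => Even l),
          (((r : ℝ) - l) ^ 2 * ((r : ℝ) - l - 1) ^ 2) /
            ((((2*m : ℕ) : ℝ) - l) * (((2*m : ℕ) : ℝ) + 2 * κ - 2 * r - l - 2) *
              ((r : ℝ) - (2*m : ℕ) + l + 1) * ((r : ℝ) - (2*m : ℕ) + l + 2)))
      = ttf n r m * ((n.factorial : ℝ)/(2^r * (n+r).factorial)) := by
    intro m hm
    simp only [Finset.mem_range] at hm
    rw [prod_eq n r m κ (2*m) hκn rfl (by omega), TT_eq n r m (by omega)]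
  rw [Finset.sum_congr rfl hstep3, ← Finset.sum_mul, ttf_sum]
  -- step 4: binomials
  rw [show 2*κ-2 = 2*n+2*r from by omega, show κ-1 = n+r from by omega]
  have hc1 : ((2*n+2*r).choose r : ℝ) = ((2*n+2*r).factorial : ℝ) / (r.factorial * (2*n+r).factorial) := by
    rw [Nat.cast_choose ℝ (by omega), show 2*n+2*r-r = 2*n+r from by omega]
  have hc2 : ((n+r).choose r : ℝ) = ((n+r).factorial : ℝ) / (r.factorial * n.factorial) := by
    rw [Nat.cast_choose ℝ (by omega), show n+r-r = n from by omega]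
  rw [hc1, hc2, zpow_neg, zpow_natCast]
  have f1 : ((2*n+r).factorial : ℝ) ≠ 0 := by positivity
  have f2 : (n.factorial : ℝ) ≠ 0 := by positivity
  have f3 : ((n+r).factorial : ℝ) ≠ 0 := by positivity
  have f4 : (r.factorial : ℝ) ≠ 0 := by positivity
  have f5 : (2:ℝ)^r ≠ 0 := by positivity
  have f6 : ((2*n+2*r).factorial : ℝ) ≠ 0 := by positivity
  field_simp
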